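/- For any quasi-choice correspondence c over a grand set X of size n ≥ 2 satisfying Axiom α, the liberal number satisfies lib(c) ≤ C(n−1, ⌊(n−1)/2⌋), and this bound is tight: the choice c_{n−1, ⌊(n−1)/2⌋+1} over an n-element set attains it. -/

import Mathlib

/-- `r` rationalizes the quasi-choice `c`: `c A` is the set of `r`-maximal elements of `A`. -/
def Rationalizes {X : Type*} (r : X → X → Prop) (c : Set X → Set X) : Prop :=
  ∀ A : Set X, c A = {a ∈ A | ∀ b ∈ A, ¬ r b a}

/-- `c` is freely rationalizable (a ballot): rationalized by an arbitrary binary relation. -/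
def FreelyRat {X : Type*} (c : Set X → Set X) : Prop :=
  ∃ r : X → X → Prop, Rationalizes r c

/-- `c` is asymmetrically rationalizable. -/
def AsymRat {X : Type*} (c : Set X → Set X) : Prop :=
  ∃ r : X → X → Prop, (∀ a b, r a b → ¬ r b a) ∧ Rationalizes r c

/-- Contractiveness: `c` is a quasi-choice. -/
def IsQuasiChoice {X : Type*} (c : Set X → Set X) : Prop :=
  ∀ A : Set X, c A ⊆ A

/-- Axiom α (Chernoff, Standard Contraction Consistency). -/
def AxiomAlpha {X : Type*} (c : Set X → Set X) : Prop :=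
  ∀ ⦃A B : Set X⦄ ⦃x : X⦄, A ⊆ B → x ∈ A → x ∈ c B → x ∈ c A

/-- Axiom γ (Standard Expansion Consistency). -/
def AxiomGamma {X : Type*} (c : Set X → Set X) : Prop :=
  ∀ ⦃A B : Set X⦄ ⦃x : X⦄, x ∈ c A → x ∈ c B → x ∈ c (A ∪ B)

/-- A liberal representation of `c` by the family of ballots `v`. -/
def IsLiberalRep {X : Type*} (c : Set X → Set X) {k : ℕ} (v : Fin k → Set X → Set X) : Prop :=
  (∀ i, FreelyRat (v i)) ∧
    ∀ A : Set X, ∀ x ∈ A, (x ∈ c A ↔ ∃ i, x ∈ v i A)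

/-- A democratic representation of `c` by the family of ballots `v`:
an item is chosen iff more than half of the ballots endorse it. -/
def IsDemRep {X : Type*} (c : Set X → Set X) {k : ℕ} (v : Fin k → Set X → Set X) : Prop :=
  (∀ i, FreelyRat (v i)) ∧
    ∀ A : Set X, ∀ x ∈ A, (x ∈ c A ↔ 2 * Nat.card {i : Fin k // x ∈ v i A} > k)

/-- The liberal number of `c`: the minimum size of a liberal representation (⊤ if none). -/
noncomputable def lib {X : Type*} (c : Set X → Set X) : ℕ∞ :=
  sInf {n : ℕ∞ | ∃ (k : ℕ) (v : Fin k → Set X → Set X), 0 < k ∧ IsLiberalRep c v ∧ n = (k : ℕ∞)}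

/-- The democratic number of `c`: the minimum size of a democratic representation (⊤ if none). -/
noncomputable def dem {X : Type*} (c : Set X → Set X) : ℕ∞ :=
  sInf {n : ℕ∞ | ∃ (k : ℕ) (v : Fin k → Set X → Set X), 0 < k ∧ IsDemRep c v ∧ n = (k : ℕ∞)}

/-- `c` is `s`-majoritarian: some finite family of ballots selects exactly the items
endorsed by a share of ballots strictly larger than `s`. -/
def Majoritarian {X : Type*} (s : ℝ) (c : Set X → Set X) : Prop :=
  ∃ (k : ℕ) (v : Fin k → Set X → Set X), 0 < k ∧ (∀ i, FreelyRat (v i)) ∧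
    ∀ A : Set X, ∀ x ∈ A,
      (x ∈ c A ↔ (Nat.card {i : Fin k // x ∈ v i A} : ℝ) / (k : ℝ) > s)

open Classical in
/-- The choice `c_{n,k}` over `{0,…,n}`: it removes `0` from menus containing `0` of
size strictly larger than `k`, and is neutral otherwise. -/
noncomputable def cnk (n k : ℕ) : Set (Fin (n + 1)) → Set (Fin (n + 1)) := fun A =>
  if (0 : Fin (n + 1)) ∈ A ∧ k < A.ncard then A \ {0} else A


section Aux

variable {X : Type*}

lemma pad_surj {β : Type*} (s : Finset β) (hs : s.Nonempty) {k : ℕ} (hk : s.card ≤ k) :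
    ∃ g : Fin k → β, (∀ i, g i ∈ s) ∧ ∀ b ∈ s, ∃ i, g i = b := by
  classical
  obtain ⟨b0, hb0⟩ := hs
  refine ⟨fun i => if h : (i : ℕ) < s.card then (s.equivFin.symm ⟨i, h⟩ : β) else b0, ?_, ?_⟩
  · intro i; dsimp only; split
    · exact (s.equivFin.symm _).2
    · exact hb0
  · intro b hb
    refine ⟨⟨(s.equivFin ⟨b, hb⟩ : ℕ), lt_of_lt_of_le (s.equivFin ⟨b, hb⟩).2 hk⟩, ?_⟩
    dsimp only
    rw [dif_pos (s.equivFin ⟨b, hb⟩).2]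
    simp

/-- The family of maximal menus at which `x` is chosen. -/
def MaxFam (c : Set X → Set X) (x : X) : Set (Finset X) :=
  {M | x ∈ c ↑M ∧ ∀ M' : Finset X, x ∈ c ↑M' → M ⊆ M' → M = M'}

lemma cover [Fintype X] {c : Set X → Set X} (hq : IsQuasiChoice c)
    (ha : AxiomAlpha c) {x : X} {A : Set X} (hA : x ∈ A) :
    x ∈ c A ↔ ∃ M ∈ MaxFam c x, A ⊆ ↑M := by
  classical
  constructor
  · intro hx
    have hne : ({M : Finset X | x ∈ c ↑M ∧ A.toFinset ⊆ M} : Set (Finset X)).Nonempty :=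
      ⟨A.toFinset, by rw [Set.coe_toFinset]; exact hx, Finset.Subset.refl _⟩
    obtain ⟨M, ⟨hM1, hM2⟩, hmax⟩ :=
      Set.Finite.exists_maximalFor id _ (Set.toFinite _) hne
    refine ⟨M, ⟨hM1, ?_⟩, ?_⟩
    · intro M' hM' hsub
      exact Finset.Subset.antisymm hsub (hmax ⟨hM', hM2.trans hsub⟩ hsub)
    · intro a haA
      exact hM2 (Set.mem_toFinset.2 haA)
  · rintro ⟨M, ⟨hM1, -⟩, hsub⟩
    exact ha hsub hA hM1

lemma maxfam_card [Fintype X] {c : Set X → Set X} (hq : IsQuasiChoice c) (x : X) :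
    (MaxFam c x).toFinite.toFinset.card ≤
      (Fintype.card X - 1).choose ((Fintype.card X - 1) / 2) := by
  classical
  set 𝒜 := (MaxFam c x).toFinite.toFinset with h𝒜
  have hxmem : ∀ M ∈ 𝒜, x ∈ M := by
    intro M hM
    exact hq _ ((Set.Finite.mem_toFinset _).1 hM).1
  set f : Finset X → Finset {y : X // y ≠ x} := fun M => M.subtype _ with hf
  have hmono : ∀ M M' : Finset X, x ∈ M' → f M ⊆ f M' → M ⊆ M' := by
    intro M M' hx' hsub a ha
    by_cases hax : a = x
    · subst hax; exact hx'
    · have h1 : (⟨a, hax⟩ : {y // y ≠ x}) ∈ f M := Finset.mem_subtype.2 ha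
      exact Finset.mem_subtype.1 (hsub h1)
  have hinj : Set.InjOn f ↑𝒜 := by
    intro M hM M' hM' hEq
    refine Finset.Subset.antisymm (hmono M M' (hxmem M' hM') ?_) (hmono M' M (hxmem M hM) ?_)
    · rw [hEq]
    · rw [hEq]
  have hanti : IsAntichain (· ⊆ ·)
      ((𝒜.image f : Finset (Finset {y : X // y ≠ x})) : Set (Finset {y : X // y ≠ x})) := by
    rintro S hS S' hS' hne hsub
    simp only [Finset.coe_image, Set.mem_image, Finset.mem_coe] at hS hS'
    obtain ⟨M, hM, rfl⟩ := hS
    obtain ⟨M', hM', rfl⟩ := hS'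
    have hMfam : M ∈ MaxFam c x := (Set.Finite.mem_toFinset _).1 hM
    have hM'fam : M' ∈ MaxFam c x := (Set.Finite.mem_toFinset _).1 hM'
    have hMM' : M ⊆ M' := hmono M M' (hq _ hM'fam.1) hsub
    exact hne (congrArg f (hMfam.2 M' hM'fam.1 hMM'))
  have hs := IsAntichain.sperner hanti
  rw [Finset.card_image_of_injOn (by
    intro M hM M' hM' h
    exact hinj (by simpa using hM) (by simpa using hM') h)] at hs
  have hcard : Fintype.card {y : X // y ≠ x} = Fintype.card X - 1 := by simp
  rwa [hcard] at hs

lemma exists_rep [Fintype X] {n : ℕ} (hX : Fintype.card X = n)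
    (c : Set X → Set X) (hq : IsQuasiChoice c) (ha : AxiomAlpha c) :
    ∃ v : Fin ((n - 1).choose ((n - 1) / 2)) → Set X → Set X, IsLiberalRep c v := by
  classical
  set k := (n - 1).choose ((n - 1) / 2) with hk
  have hcard : ∀ x : X, (MaxFam c x).toFinite.toFinset.card ≤ k := by
    intro x; have h1 := maxfam_card hq x; rwa [hX] at h1
  have hMex : ∀ x : X, ∃ g : Fin k → Finset X,
      (∀ i, g i ∈ MaxFam c x ∨ g i = ∅) ∧ ∀ S ∈ MaxFam c x, ∃ i, g i = S := by
    intro x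
    by_cases h : (MaxFam c x).Nonempty
    · obtain ⟨g, hg1, hg2⟩ := pad_surj (MaxFam c x).toFinite.toFinset
        ((Set.Finite.toFinset_nonempty _).2 h) (hcard x)
      exact ⟨g, fun i => Or.inl ((Set.Finite.mem_toFinset _).1 (hg1 i)),
        fun S hS => hg2 S ((Set.Finite.mem_toFinset _).2 hS)⟩
    · exact ⟨fun _ => ∅, fun _ => Or.inr rfl, fun S hS => absurd ⟨S, hS⟩ h⟩
  choose M hM1 hM2 using hMex
  refine ⟨fun i A => {a ∈ A | ∀ b ∈ A, ¬ b ∉ M a i}, ?_, ?_⟩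
  · intro i
    exact ⟨fun b a => b ∉ M a i, fun A => rfl⟩
  · intro A x hxA
    constructor
    · intro hx
      obtain ⟨S, hS, hsub⟩ := (cover hq ha hxA).1 hx
      obtain ⟨i, hi⟩ := hM2 x S hS
      exact ⟨i, hxA, fun b hb => not_not.2 (by rw [hi]; exact hsub hb)⟩
    · rintro ⟨i, hxA', hall⟩
      have hsub : A ⊆ ↑(M x i) := fun b hb => not_not.1 (hall b hb)
      rcases hM1 x i with hmem | hemp
      · exact ha hsub hxA hmem.1
      · rw [hemp] at hsub
        exact absurd (hsub hxA) (by simp)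

lemma k_pos (n : ℕ) : 0 < (n - 1).choose ((n - 1) / 2) :=
  Nat.choose_pos (Nat.div_le_self _ _)

lemma cnk_quasi (m t : ℕ) : IsQuasiChoice (cnk m t) := by
  intro A
  simp only [cnk]
  split_ifs with h
  · exact Set.diff_subset
  · exact subset_rfl

lemma cnk_alpha (m t : ℕ) : AxiomAlpha (cnk m t) := by
  intro A B x hAB hxA hxB
  have key : (0 ∈ A ∧ t < A.ncard) → (0 ∈ B ∧ t < B.ncard) := fun h =>
    ⟨hAB h.1, lt_of_lt_of_le h.2 (Set.ncard_le_ncard hAB (Set.toFinite B))⟩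
  simp only [cnk] at hxB ⊢
  split_ifs with hA
  · rw [if_pos (key hA)] at hxB
    exact ⟨hxA, hxB.2⟩
  · exact hxA

lemma cnk_mem_zero (m : ℕ) (A : Set (Fin (m + 1))) :
    (0 : Fin (m + 1)) ∈ cnk m (m / 2 + 1) A ↔ 0 ∈ A ∧ A.ncard ≤ m / 2 + 1 := by
  simp only [cnk]
  split_ifs with h
  · simp only [Set.mem_diff, Set.mem_singleton_iff]
    constructor
    · rintro ⟨-, h0⟩; simp at h0
    · rintro ⟨-, hle⟩; exact absurd h.2 (not_lt.2 hle)
  · constructor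
    · intro h0
      refine ⟨h0, ?_⟩
      by_contra hgt
      exact h ⟨h0, lt_of_not_ge hgt⟩
    · exact fun h0 => h0.1

lemma cnk_lower (m : ℕ) {K : ℕ} (v : Fin K → Set (Fin (m + 1)) → Set (Fin (m + 1)))
    (hrep : IsLiberalRep (cnk m (m / 2 + 1)) v) : m.choose (m / 2) ≤ K := by
  classical
  obtain ⟨hfr, hiff⟩ := hrep
  choose r hr using hfr
  set 𝒮 : Finset (Finset (Fin (m + 1))) :=
    Finset.univ.powerset.filter (fun A => 0 ∈ A ∧ A.card = m / 2 + 1) with h𝒮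
  have hSmem : ∀ A ∈ 𝒮, 0 ∈ A ∧ A.card = m / 2 + 1 := by
    intro A hA
    exact (Finset.mem_filter.1 hA).2
  have hchoose : ∀ A ∈ 𝒮, ∃ i, (0 : Fin (m + 1)) ∈ v i ↑A := by
    intro A hA
    obtain ⟨h0, hc⟩ := hSmem A hA
    refine (hiff ↑A 0 h0).1 ?_
    refine (cnk_mem_zero m ↑A).2 ⟨h0, ?_⟩
    rw [Set.ncard_coe_finset, hc]
  set f : Finset (Fin (m + 1)) → ℕ :=
    fun A => if h : ∃ i, (0 : Fin (m + 1)) ∈ v i ↑A then (h.choose : ℕ) else 0 with hfdef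
  have hmaps : ∀ A ∈ 𝒮, f A ∈ Finset.range K := by
    intro A hA
    have h := hchoose A hA
    simp only [hfdef, dif_pos h]
    exact Finset.mem_range.2 h.choose.isLt
  have hinj : Set.InjOn f ↑𝒮 := by
    intro A hA A' hA' hEq
    have hA𝒮 : A ∈ 𝒮 := hA
    have hA'𝒮 : A' ∈ 𝒮 := hA'
    have h1 := hchoose A hA𝒮
    have h2 := hchoose A' hA'𝒮
    simp only [hfdef, dif_pos h1, dif_pos h2] at hEq
    set i := h1.choose with hi
    have hii : h2.choose = i := Fin.ext hEq.symm
    have hv1 : (0 : Fin (m + 1)) ∈ v i ↑A := h1.choose_spec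
    have hv2 : (0 : Fin (m + 1)) ∈ v i ↑A' := by rw [← hii]; exact h2.choose_spec
    rw [hr i] at hv1 hv2
    have hvu : (0 : Fin (m + 1)) ∈ v i ↑(A ∪ A') := by
      rw [hr i]
      refine ⟨?_, ?_⟩
      · simp only [Finset.coe_union, Set.mem_union]
        exact Or.inl hv1.1
      · intro b hb
        rcases by simpa using hb with hbA | hbA'
        · exact hv1.2 b hbA
        · exact hv2.2 b hbA'
    have h0u : (0 : Fin (m + 1)) ∈ (↑(A ∪ A') : Set (Fin (m + 1))) := by
      simp only [Finset.coe_union, Set.mem_union]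
      exact Or.inl hv1.1
    have hcu : (0 : Fin (m + 1)) ∈ cnk m (m / 2 + 1) ↑(A ∪ A') :=
      (hiff ↑(A ∪ A') 0 h0u).2 ⟨i, hvu⟩
    have hle := ((cnk_mem_zero m ↑(A ∪ A')).1 hcu).2
    rw [Set.ncard_coe_finset] at hle
    have hAu : A = A ∪ A' := Finset.eq_of_subset_of_card_le Finset.subset_union_left
      (by rw [(hSmem A hA𝒮).2]; exact hle)
    have hA'u : A' = A ∪ A' := Finset.eq_of_subset_of_card_le Finset.subset_union_right
      (by rw [(hSmem A' hA'𝒮).2]; exact hle)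
    exact hAu.trans hA'u.symm
  have hcard : 𝒮.card = m.choose (m / 2) := by
    have herase : ((Finset.univ : Finset (Fin (m + 1))).erase 0).card = m := by simp
    have hbij : 𝒮.card =
        (Finset.powersetCard (m / 2) ((Finset.univ : Finset (Fin (m + 1))).erase 0)).card := by
      refine Finset.card_bij (fun A _ => A.erase 0) ?_ ?_ ?_
      · intro A hA
        obtain ⟨h0, hc⟩ := hSmem A hA
        refine Finset.mem_powersetCard.2 ⟨Finset.erase_subset_erase 0 (Finset.subset_univ A), ?_⟩
        rw [Finset.card_erase_of_mem h0, hc]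
        omega
      · intro A hA A' hA' hEq
        rw [← Finset.insert_erase (hSmem A hA).1, ← Finset.insert_erase (hSmem A' hA').1, hEq]
      · intro B hB
        obtain ⟨hBsub, hBcard⟩ := Finset.mem_powersetCard.1 hB
        have h0B : (0 : Fin (m + 1)) ∉ B := by
          intro h
          exact absurd rfl (Finset.mem_erase.1 (hBsub h)).1
        refine ⟨insert 0 B, ?_, Finset.erase_insert h0B⟩
        refine Finset.mem_filter.2 ⟨Finset.mem_powerset.2 (Finset.subset_univ _),
          Finset.mem_insert_self _ _, ?_⟩
        rw [Finset.card_insert_of_notMem h0B, hBcard]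
    rw [hbij, Finset.card_powersetCard, herase]
  calc m.choose (m / 2) = 𝒮.card := hcard.symm
    _ ≤ (Finset.range K).card := Finset.card_le_card_of_injOn f hmaps hinj
    _ = K := Finset.card_range K

end Aux

theorem stmt19 {X : Type*} [Fintype X] (n : ℕ) (hn : 2 ≤ n) (hX : Fintype.card X = n)
    (c : Set X → Set X) (hq : IsQuasiChoice c) (ha : AxiomAlpha c) :
    lib c ≤ (((n - 1).choose ((n - 1) / 2) : ℕ) : ℕ∞) ∧
      (∀ m : ℕ, m + 1 = n →
        lib (cnk m (m / 2 + 1)) = (((n - 1).choose ((n - 1) / 2) : ℕ) : ℕ∞)) := by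
  constructor
  · obtain ⟨v, hv⟩ := exists_rep hX c hq ha
    exact sInf_le ⟨_, v, k_pos n, hv, rfl⟩
  · intro m hm
    have hn1 : n - 1 = m := by omega
    rw [hn1]
    refine le_antisymm ?_ ?_
    · obtain ⟨v, hv⟩ := exists_rep (Fintype.card_fin (m + 1)) (cnk m (m / 2 + 1))
        (cnk_quasi m _) (cnk_alpha m _)
      exact sInf_le ⟨_, v, Nat.choose_pos (Nat.div_le_self _ _), hv, by norm_num⟩
    · refine le_sInf ?_
      rintro x ⟨K, v, hK, hrep, rfl⟩
      exact_mod_cast cnk_lower m v hrep
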